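/- Let Δ be a simplicial complex on {x_1,...,x_n}, Δ' its copy on {y_1,...,y_n}, and Δ^♯ the complex on {x_1,...,x_n,y_1,...,y_n} whose facets are {x_i : i ∈ F} ∪ {y_j : j ∉ F} for facets F of Δ. Then a set F = {y_j : j ∈ B} consisting only of y-vertices is a vertex cover of Δ^♯ if and only if F is not a face of Δ'. -/

import Mathlib

/-- a set `{y_j : j ∈ B}` of y-vertices is a vertex cover of `Δ^♯`
(whose facets are the sets `sharp F`, `F ∈ Δ`) if and only if `B` is not a face of `Δ`
(i.e. the corresponding set of y-vertices is not a face of the copy `Δ'`). -/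
theorem stmt2 (n : ℕ) (Δ : Set (Finset (Fin n)))
    (hΔ : ∀ F ∈ Δ, ∀ G ⊆ F, G ∈ Δ)
    (sharp : Finset (Fin n) → Finset (Fin n ⊕ Fin n))
    (hsharp : ∀ F, sharp F = F.image Sum.inl ∪ Fᶜ.image Sum.inr)
    (B : Finset (Fin n)) :
    (∀ F ∈ Δ, (sharp F ∩ B.image Sum.inr).Nonempty) ↔ B ∉ Δ := by
  constructor
  · intro h hB
    obtain ⟨v, hv⟩ := h B hB
    rw [hsharp] at hv
    simp only [Finset.mem_inter, Finset.mem_union, Finset.mem_image,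
      Finset.mem_compl] at hv
    obtain ⟨hl | ⟨j, hj, rfl⟩, hr⟩ := hv
    · obtain ⟨i, _, rfl⟩ := hl
      obtain ⟨k, _, hk⟩ := hr
      cases hk
    · obtain ⟨k, hk, hke⟩ := hr
      exact hj (Sum.inr.inj hke ▸ hk)
  · intro hB F hF
    have : ¬ B ⊆ F := fun hsub => hB (hΔ F hF B hsub)
    obtain ⟨j, hjB, hjF⟩ := Finset.not_subset.mp this
    refine ⟨Sum.inr j, ?_⟩
    rw [hsharp]
    simp only [Finset.mem_inter, Finset.mem_union, Finset.mem_image,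
      Finset.mem_compl]
    exact ⟨Or.inr ⟨j, hjF, rfl⟩, j, hjB, rfl⟩
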